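/- The balanced wirings form a subsemiring of the unification semiring, and for balanced wirings F, G, the height of FG is at most max(h(F), h(G)). -/

import Mathlib

/-- First-order terms over natural-number symbols: variables and applications. -/
inductive Tm : Type
  | var : ℕ → Tm
  | app : ℕ → List Tm → Tm

namespace Tm

/-- Apply a substitution (map from variables to terms) homomorphically. -/
def subst (σ : ℕ → Tm) : Tm → Tm
  | var x => σ x
  | app f ts => app f (ts.attach.map fun ⟨t, _⟩ => subst σ t)

/-- List of variables occurring in a term. -/
def varsL : Tm → List ℕ
  | var x => [x]
  | app _ ts => ts.attach.flatMap fun ⟨t, _⟩ => varsL t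

/-- Height of a term: maximal distance from the root to a subterm. -/
def height : Tm → ℕ
  | var _ => 0
  | app _ ts => (ts.attach.map fun ⟨t, _⟩ => height t + 1).foldr max 0

/-- Heights of the occurrences of the variable `x` in a term. -/
def occs (x : ℕ) : Tm → List ℕ
  | var y => if y = x then [0] else []
  | app _ ts => ts.attach.flatMap fun ⟨t, _⟩ => (occs x t).map (· + 1)

/-- Symbols occurring in a term, together with the arity they are used with. -/
def symar : Tm → List (ℕ × ℕ)
  | var _ => []
  | app f ts => (f, ts.length) :: ts.attach.flatMap fun ⟨t, _⟩ => symar t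

end Tm

open Tm

/-- Set of variables of a term. -/
def tvars (t : Tm) : Set ℕ := {x | x ∈ t.varsL}

/-- A term is closed when it has no variables. -/
def Closed (t : Tm) : Prop := t.varsL = []

/-- A substitution is finitary when it is the identity on all but finitely many variables. -/
def Finitary (σ : ℕ → Tm) : Prop := {x | σ x ≠ .var x}.Finite

/-- `σ` unifies `t` and `u`. -/
def Unifies (σ : ℕ → Tm) (t u : Tm) : Prop := subst σ t = subst σ u

/-- `θ` is a most general unifier of `t` and `u`: a (finitary) unifier such that
any other finitary unifier factors as an instance of it. -/
def IsMGU (θ : ℕ → Tm) (t u : Tm) : Prop :=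
  Finitary θ ∧ Unifies θ t u ∧
    ∀ σ, Finitary σ → Unifies σ t u → ∃ ρ, Finitary ρ ∧ ∀ x, σ x = subst ρ (θ x)

/-- Renaming of a term along a bijection of variables. -/
def rename (π : ℕ ≃ ℕ) (t : Tm) : Tm := subst (fun x => .var (π x)) t

/-- A flow is (the data of) a pair of terms `head ⊸ body`. -/
abbrev UFlow := Tm × Tm

/-- The flow condition: the variables of the head occur in the body. -/
def IsFlow (f : UFlow) : Prop := tvars f.1 ⊆ tvars f.2

/-- Equality of flows up to (simultaneous, bijective) renaming of variables. -/
def FlowEquiv (f g : UFlow) : Prop :=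
  ∃ π : ℕ ≃ ℕ, rename π f.1 = g.1 ∧ rename π f.2 = g.2

/-- Variables of a flow. -/
def flowVars (f : UFlow) : Set ℕ := tvars f.1 ∪ tvars f.2

/-- `h` is a product of the flows `f = u ⊸ v` and `g = t ⊸ w`: choosing representatives
with disjoint variables, `h = uθ ⊸ wθ` for `θ` a most general unifier of `v` and `t`. -/
def IsProd (f g h : UFlow) : Prop :=
  ∃ f' g' θ, FlowEquiv f f' ∧ FlowEquiv g g' ∧ flowVars f' ∩ flowVars g' = ∅ ∧
    IsMGU θ f'.2 g'.1 ∧ h = (subst θ f'.1, subst θ g'.2)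

/-- A wiring: a set of flows (finite sets of flows are considered up to renaming,
so we model them as sets of representatives). -/
abbrev Wiring := Set UFlow

/-- Product of wirings: pointwise product of flows, where defined. -/
def wmul (F G : Wiring) : Wiring := {h | ∃ f ∈ F, ∃ g ∈ G, IsProd f g h}

/-- The unit wiring `I = x ⊸ x`. -/
def wI : Wiring := {f | FlowEquiv (.var 0, .var 0) f}

/-- Powers of a wiring. -/
def wpow (F : Wiring) : ℕ → Wiring
  | 0 => wI
  | n + 1 => wmul F (wpow F n)

/-- Equality of wirings up to renaming of each flow. -/
def WEq (F G : Wiring) : Prop :=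
  (∀ f ∈ F, ∃ g ∈ G, FlowEquiv f g) ∧ ∀ g ∈ G, ∃ f ∈ F, FlowEquiv f g

/-- A fact: a flow of the form `t ⊸ t` with `t` closed. -/
def IsFact (f : UFlow) : Prop := Closed f.1 ∧ f.2 = f.1

/-- Application of a wiring to (the fact associated with) a closed term:
the set of product flows. -/
def appF (F : Wiring) (t : Tm) : Set UFlow := {h | ∃ f ∈ F, IsProd f (t, t) h}

/-- Application of a wiring to a fact, keeping the facts produced. -/
def factApp (F : Wiring) (t : Tm) : Set Tm := {v | ∃ f ∈ F, IsProd f (t, t) (v, v)}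

/-- A wiring is deterministic if it produces at most one fact from any fact. -/
def Deterministic (F : Wiring) : Prop := ∀ t, Closed t → (appF F t).Subsingleton

/-- Two terms are matchable if renamings of them with disjoint variables are unifiable. -/
def Matchable (t u : Tm) : Prop :=
  ∃ (π π' : ℕ ≃ ℕ), tvars (rename π t) ∩ tvars (rename π' u) = ∅ ∧
    ∃ θ, Finitary θ ∧ Unifies θ (rename π t) (rename π' u)

/-- A flow is balanced if each variable has all its occurrences at the same height. -/
def BalancedF (f : UFlow) : Prop :=
  ∀ x, ∀ n ∈ occs x f.1 ++ occs x f.2, ∀ m ∈ occs x f.1 ++ occs x f.2, n = m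

/-- Height of a flow. -/
def heightF (f : UFlow) : ℕ := max f.1.height f.2.height

/-- A wiring is balanced if all its flows are. -/
def BalancedW (F : Wiring) : Prop := ∀ f ∈ F, BalancedF f

/-- Height of a wiring: maximal height of its flows. -/
noncomputable def heightW (F : Wiring) : ℕ := sSup (heightF '' F)

/-- The computation space of a wiring `F`: closed terms (identified with the
corresponding facts) of height at most `heightW F` built using only symbols
(with their arities) occurring in `F` and the constant `⋆` (symbol `0`). -/
noncomputable def compSpace (F : Wiring) : Set Tm :=
  {t | Closed t ∧ t.height ≤ heightW F ∧
    ∀ q ∈ t.symar, q = (0, 0) ∨ ∃ f ∈ F, q ∈ f.1.symar ++ f.2.symar}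

/-- Nilpotency of a wiring: some power is the empty wiring. -/
def Nilpotent (F : Wiring) : Prop := ∃ n, 0 < n ∧ wpow F n = ∅

/-- Edges of the computation graph of `F`: from `u` to `v` iff `v ∈ F u`. -/
noncomputable def Edge (F : Wiring) (u v : Tm) : Prop :=
  u ∈ compSpace F ∧ v ∈ compSpace F ∧ v ∈ factApp F u

/-- Acyclicity of the computation graph of `F`. -/
noncomputable def AcyclicCG (F : Wiring) : Prop :=
  ¬ ∃ n, 0 < n ∧ ∃ c : ℕ → Tm, (∀ i < n, Edge F (c i) (c (i + 1))) ∧ c n = c 0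

section AUX
namespace Tm

theorem subst_app (σ : ℕ → Tm) (f : ℕ) (ts : List Tm) :
    subst σ (app f ts) = app f (ts.map (subst σ)) := by
  rw [subst]; exact congrArg _ (List.attach_map_val (l := ts))

theorem varsL_app (f : ℕ) (ts : List Tm) :
    varsL (app f ts) = ts.flatMap varsL := by
  rw [varsL, List.flatMap, List.flatMap]
  exact congrArg _ (List.attach_map_val (l := ts))

theorem occs_app (x f : ℕ) (ts : List Tm) :
    occs x (app f ts) = ts.flatMap (fun t => (occs x t).map (· + 1)) := by
  rw [occs, List.flatMap, List.flatMap]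
  exact congrArg _ (List.attach_map_val (l := ts) (f := fun t => (occs x t).map (· + 1)))

theorem height_app (f : ℕ) (ts : List Tm) :
    height (app f ts) = (ts.map fun t => height t + 1).foldr max 0 := by
  rw [height]; exact congrArg _ (List.attach_map_val (l := ts) (f := fun t => height t + 1))

@[simp] theorem subst_var' (σ : ℕ → Tm) (x : ℕ) : subst σ (var x) = σ x := by rw [subst]
@[simp] theorem varsL_var (x : ℕ) : varsL (var x) = [x] := by rw [varsL]
@[simp] theorem occs_var (x y : ℕ) : occs x (var y) = if y = x then [0] else [] := by rw [occs]
@[simp] theorem height_var (x : ℕ) : height (var x) = 0 := by rw [height]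

theorem my_ind {P : Tm → Prop} (hv : ∀ x, P (var x))
    (ha : ∀ f ts, (∀ t ∈ ts, P t) → P (app f ts)) : ∀ t, P t
  | var x => hv x
  | app f ts => ha f ts fun t ht => my_ind hv ha t

end Tm
end AUX
section AUX2
namespace Tm

theorem foldr_max_le {l : List ℕ} {B : ℕ} : l.foldr max 0 ≤ B ↔ ∀ a ∈ l, a ≤ B := by
  induction l with
  | nil => simp
  | cons a l ih => simp [Nat.max_le, ih]

theorem le_foldr_max {l : List ℕ} {a : ℕ} (h : a ∈ l) : a ≤ l.foldr max 0 := by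
  induction l with
  | nil => simp at h
  | cons b l ih =>
    rcases List.mem_cons.1 h with h | h
    · simp [h, Nat.le_max_left]
    · exact le_trans (ih h) (Nat.le_max_right _ _)

theorem mem_varsL_iff' {y : ℕ} {s : Tm} : y ∈ varsL s ↔ ∃ n, n ∈ occs y s := by
  induction s using my_ind with
  | hv x =>
    by_cases h : x = y
    · simp [h]
    · simp [h, Ne.symm h]
  | ha f ts ih =>
    rw [varsL_app, occs_app]
    constructor
    · intro h
      obtain ⟨t, ht, hy⟩ := List.mem_flatMap.1 h
      obtain ⟨n, hn⟩ := (ih t ht).1 hy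
      exact ⟨n + 1, List.mem_flatMap.2 ⟨t, ht, List.mem_map.2 ⟨n, hn, rfl⟩⟩⟩
    · rintro ⟨n, hn⟩
      obtain ⟨t, ht, hn⟩ := List.mem_flatMap.1 hn
      obtain ⟨m, hm, rfl⟩ := List.mem_map.1 hn
      exact List.mem_flatMap.2 ⟨t, ht, (ih t ht).2 ⟨m, hm⟩⟩

theorem mem_varsL_of_occs {y n : ℕ} {s : Tm} (h : n ∈ occs y s) : y ∈ varsL s :=
  mem_varsL_iff'.2 ⟨n, h⟩

theorem occs_zero {y : ℕ} {s : Tm} (h : 0 ∈ occs y s) : s = var y := by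
  cases s with
  | var x =>
    rw [occs_var] at h
    split at h
    · simp_all
    · simp at h
  | app f ts =>
    rw [occs_app] at h
    simp only [List.mem_flatMap, List.mem_map] at h
    obtain ⟨t, ht, m, hm, hm0⟩ := h
    omega

theorem occs_le_height {y : ℕ} {s : Tm} : ∀ n, n ∈ occs y s → n ≤ height s := by
  induction s using my_ind with
  | hv x => intro n h; rw [occs_var] at h; split at h <;> simp_all
  | ha f ts ih =>
    intro n h
    rw [occs_app] at h; rw [height_app]
    simp only [List.mem_flatMap, List.mem_map] at h
    obtain ⟨t, ht, m, hm, rfl⟩ := h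
    calc m + 1 ≤ height t + 1 := by have := ih t ht m hm; omega
    _ ≤ _ := le_foldr_max (List.mem_map_of_mem (f := fun t => height t + 1) ht)

theorem occs_subst {σ : ℕ → Tm} {y : ℕ} {s : Tm} : ∀ n,
    (n ∈ occs y (subst σ s) ↔ ∃ z m m', m ∈ occs z s ∧ m' ∈ occs y (σ z) ∧ n = m + m') := by
  induction s using my_ind with
  | hv x =>
    intro n
    simp only [subst_var', occs_var]
    constructor
    · intro h
      exact ⟨x, 0, n, by simp, h, by omega⟩
    · rintro ⟨z, m, m', hm, hm', rfl⟩
      split at hm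
      · rename_i hz; subst hz
        simp only [List.mem_singleton] at hm; subst hm
        rw [Nat.zero_add]; exact hm'
      · simp at hm
  | ha f ts ih =>
    intro n
    rw [subst_app, occs_app]
    constructor
    · intro h
      obtain ⟨t', ht', hk⟩ := List.mem_flatMap.1 h
      obtain ⟨t, ht, rfl⟩ := List.mem_map.1 ht'
      obtain ⟨k, hk2, rfl⟩ := List.mem_map.1 hk
      obtain ⟨z, m, m', hm, hm', rfl⟩ := (ih t ht k).1 hk2
      have hmem : m + 1 ∈ occs z (app f ts) := by
        rw [occs_app]
        exact List.mem_flatMap.2 ⟨t, ht, List.mem_map.2 ⟨m, hm, rfl⟩⟩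
      exact ⟨z, m + 1, m', hmem, hm', by omega⟩
    · rintro ⟨z, m, m', hm, hm', rfl⟩
      rw [occs_app] at hm
      obtain ⟨t, ht, hm2⟩ := List.mem_flatMap.1 hm
      obtain ⟨m0, hm0, rfl⟩ := List.mem_map.1 hm2
      refine List.mem_flatMap.2 ⟨subst σ t, List.mem_map_of_mem (f := subst σ) ht, ?_⟩
      exact List.mem_map.2 ⟨m0 + m', (ih t ht (m0 + m')).2 ⟨z, m0, m', hm0, hm', rfl⟩, by omega⟩

theorem height_subst_le {σ : ℕ → Tm} {s : Tm} : ∀ B,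
    (∀ z m, m ∈ occs z s → m + height (σ z) ≤ B) → height s ≤ B →
    height (subst σ s) ≤ B := by
  induction s using my_ind with
  | hv x => intro B h1 h2; simpa using h1 x 0 (by simp)
  | ha f ts ih =>
    intro B h1 h2
    rw [subst_app, height_app]
    rw [foldr_max_le]
    intro a ha
    obtain ⟨t', ht', rfl⟩ := List.mem_map.1 ha
    obtain ⟨t, ht, rfl⟩ := List.mem_map.1 ht'
    have hB : height t + 1 ≤ B := by
      rw [height_app, foldr_max_le] at h2
      exact h2 _ (List.mem_map_of_mem (f := fun t => height t + 1) ht)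
    have : height (subst σ t) ≤ B - 1 := by
      refine ih t ht (B - 1) (fun z m hm => ?_) (by omega)
      have hmem : m + 1 ∈ occs z (app f ts) := by
        rw [occs_app]
        exact List.mem_flatMap.2 ⟨t, ht, List.mem_map.2 ⟨m, hm, rfl⟩⟩
      have := h1 z (m + 1) hmem
      omega
    omega

theorem subst_subst (σ τ : ℕ → Tm) (s : Tm) :
    subst σ (subst τ s) = subst (fun z => subst σ (τ z)) s := by
  induction s using my_ind with
  | hv x => simp
  | ha f ts ih =>
    simp only [subst_app, List.map_map]
    congr 1
    exact List.map_congr_left fun t ht => ih t ht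

theorem subst_congr {σ τ : ℕ → Tm} {s : Tm} (h : ∀ z ∈ varsL s, σ z = τ z) :
    subst σ s = subst τ s := by
  induction s using my_ind with
  | hv x => simpa using h x (by simp)
  | ha f ts ih =>
    simp only [subst_app]
    congr 1
    refine List.map_congr_left fun t ht => ih t ht fun z hz => h z ?_
    rw [varsL_app]; exact List.mem_flatMap.2 ⟨t, ht, hz⟩

@[simp] theorem subst_id (s : Tm) : subst (fun z => var z) s = s := by
  induction s using my_ind with
  | hv x => simp
  | ha f ts ih =>
    rw [subst_app]
    congr 1
    exact (List.map_congr_left ih).trans (List.map_id _)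

theorem subst_eq_self {τ : ℕ → Tm} {s : Tm} (h : subst τ s = s) :
    ∀ y ∈ varsL s, τ y = var y := by
  induction s using my_ind with
  | hv x => simpa using h
  | ha f ts ih =>
    intro y hy
    rw [varsL_app] at hy
    obtain ⟨t, ht, hy⟩ := List.mem_flatMap.1 hy
    rw [subst_app] at h
    have hmaps : ts.map (subst τ) = ts.map id := by
      have : ts.map (subst τ) = ts := by injection h
      rw [this, List.map_id]
    have ht' : subst τ t = t := List.map_inj_left.1 hmaps t ht
    exact ih t ht ht' y hy

theorem mem_vars_subst {σ : ℕ → Tm} {y : ℕ} {s : Tm} :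
    y ∈ varsL (subst σ s) ↔ ∃ z ∈ varsL s, y ∈ varsL (σ z) := by
  rw [mem_varsL_iff']
  constructor
  · rintro ⟨n, hn⟩
    obtain ⟨z, m, m', hm, hm', rfl⟩ := (occs_subst n).1 hn
    exact ⟨z, mem_varsL_of_occs hm, mem_varsL_of_occs hm'⟩
  · rintro ⟨z, hz, hy⟩
    obtain ⟨m, hm⟩ := mem_varsL_iff'.1 hz
    obtain ⟨m', hm'⟩ := mem_varsL_iff'.1 hy
    exact ⟨m + m', (occs_subst _).2 ⟨z, m, m', hm, hm', rfl⟩⟩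

theorem height_subst_rename {σ : ℕ → Tm} {s : Tm}
    (h : ∀ y ∈ varsL s, ∃ y', σ y = var y') : height (subst σ s) = height s := by
  induction s using my_ind with
  | hv x =>
    obtain ⟨y', hy'⟩ := h x (by simp)
    simp [hy']
  | ha f ts ih =>
    simp only [subst_app, height_app, List.map_map]
    congr 1
    refine List.map_congr_left fun t ht => ?_
    have := ih t ht fun y hy => h y (by rw [varsL_app]; exact List.mem_flatMap.2 ⟨t, ht, hy⟩)
    simpa using this

theorem occs_rename {σ : ℕ → Tm} {g : ℕ → ℕ} {s : Tm}
    (hg : ∀ y ∈ varsL s, σ y = var (g y)) {y' n : ℕ} :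
    n ∈ occs y' (subst σ s) ↔ ∃ z, z ∈ varsL s ∧ g z = y' ∧ n ∈ occs z s := by
  rw [occs_subst]
  constructor
  · rintro ⟨z, m, m', hm, hm', rfl⟩
    have hz : z ∈ varsL s := mem_varsL_of_occs hm
    rw [hg z hz, occs_var] at hm'
    split at hm'
    · rename_i he
      simp only [List.mem_singleton] at hm'
      exact ⟨z, hz, he, by simpa [hm'] using hm⟩
    · simp at hm'
  · rintro ⟨z, hz, rfl, hn⟩
    exact ⟨z, n, 0, hn, by simp [hg z hz], by omega⟩

end Tm
end AUX2
section AUX3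
namespace Tm

def size : Tm → ℕ
  | var _ => 1
  | app _ ts => 1 + (ts.attach.map fun ⟨t, _⟩ => size t).sum

theorem size_app (f : ℕ) (ts : List Tm) : size (app f ts) = 1 + (ts.map size).sum := by
  rw [size]; exact congrArg _ (congrArg _ (List.attach_map_val (l := ts)))

theorem size_pos (s : Tm) : 1 ≤ size s := by
  cases s with
  | var x => rw [size]
  | app f ts => rw [size_app]; omega

end Tm

open Tm

def UnifiesE (σ : ℕ → Tm) (E : List (ℕ × Tm × Tm)) : Prop :=
  ∀ e ∈ E, subst σ e.2.1 = subst σ e.2.2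

def varsE (E : List (ℕ × Tm × Tm)) : Finset ℕ :=
  (E.flatMap fun e => e.2.1.varsL ++ e.2.2.varsL).toFinset

theorem mem_varsE {x : ℕ} {E : List (ℕ × Tm × Tm)} :
    x ∈ varsE E ↔ ∃ e ∈ E, x ∈ varsL e.2.1 ∨ x ∈ varsL e.2.2 := by
  simp [varsE, List.mem_flatMap, List.mem_append]

def sizeE (E : List (ℕ × Tm × Tm)) : ℕ := (E.map fun e => size e.2.1 + size e.2.2).sum

def UInv (ℓ : ℕ → ℕ) (H : ℕ) (E : List (ℕ × Tm × Tm)) : Prop :=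
  ∀ e ∈ E, (∀ y m, m ∈ occs y e.2.1 → e.1 + m = ℓ y) ∧
    (∀ y m, m ∈ occs y e.2.2 → e.1 + m = ℓ y) ∧
    e.1 + height e.2.1 ≤ H ∧ e.1 + height e.2.2 ≤ H

def Concl (ℓ : ℕ → ℕ) (H : ℕ) (E : List (ℕ × Tm × Tm)) (θ : ℕ → Tm) : Prop :=
  Finitary θ ∧ UnifiesE θ E ∧
    (∀ σ, Finitary σ → UnifiesE σ E → ∃ ρ, Finitary ρ ∧ ∀ x, σ x = subst ρ (θ x)) ∧
    (∀ x y m, m ∈ occs y (θ x) → ℓ x + m = ℓ y) ∧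
    (∀ x, θ x ≠ Tm.var x → ℓ x + height (θ x) ≤ H) ∧
    (∀ x, θ x ≠ Tm.var x → x ∈ varsE E) ∧
    (∀ x y, y ∈ varsL (θ x) → y ∈ varsE E ∨ y = x)

theorem zip_sum_sizes : ∀ (ss ts : List Tm), ss.length = ts.length →
    ((ss.zip ts).map fun p => size p.1 + size p.2).sum = (ss.map size).sum + (ts.map size).sum := by
  intro ss
  induction ss with
  | nil => intro ts h; cases ts with | nil => simp | cons a l => simp at h
  | cons a l ih =>
    intro ts h
    cases ts with
    | nil => simp at h
    | cons b m =>
      simp only [List.zip_cons_cons, List.map_cons, List.sum_cons]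
      rw [ih m (by simpa using h)]
      omega

theorem map_eq_of_zip {h : Tm → Tm} : ∀ (ss ts : List Tm), ss.length = ts.length →
    (∀ p ∈ ss.zip ts, h p.1 = h p.2) → ss.map h = ts.map h := by
  intro ss
  induction ss with
  | nil => intro ts hl _; cases ts with | nil => simp | cons a l => simp at hl
  | cons a l ih =>
    intro ts hl hp
    cases ts with
    | nil => simp at hl
    | cons b m =>
      simp only [List.map_cons, List.cons.injEq]
      exact ⟨hp (a, b) (by simp), ih m (by simpa using hl)
        fun p hpm => hp p (by simp [hpm])⟩

theorem zip_of_map_eq {h : Tm → Tm} : ∀ (ss ts : List Tm),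
    ss.map h = ts.map h → ∀ p ∈ ss.zip ts, h p.1 = h p.2 := by
  intro ss
  induction ss with
  | nil => intro ts _ p hp; simp at hp
  | cons a l ih =>
    intro ts he p hp
    cases ts with
    | nil => simp at hp
    | cons b m =>
      simp only [List.map_cons, List.cons.injEq] at he
      rcases List.mem_cons.1 hp with h1 | h1
      · rw [h1]; exact he.1
      · exact ih m he.2 p h1

theorem mem_occs_app {y m : ℕ} {t : Tm} {f : ℕ} {ts : List Tm} (ht : t ∈ ts)
    (hm : m ∈ occs y t) : m + 1 ∈ occs y (app f ts) := by
  rw [occs_app]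
  exact List.mem_flatMap.2 ⟨t, ht, List.mem_map.2 ⟨m, hm, rfl⟩⟩

theorem height_lt_app {t : Tm} {f : ℕ} {ts : List Tm} (ht : t ∈ ts) :
    height t + 1 ≤ height (app f ts) := by
  rw [height_app]
  exact le_foldr_max (List.mem_map_of_mem (f := fun t => height t + 1) ht)

theorem mem_varsL_app {z : ℕ} {t : Tm} {f : ℕ} {ts : List Tm} (ht : t ∈ ts)
    (hz : z ∈ varsL t) : z ∈ varsL (app f ts) := by
  rw [varsL_app]; exact List.mem_flatMap.2 ⟨t, ht, hz⟩

theorem finitary_var : Finitary (fun z => Tm.var z) := by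
  apply Set.Finite.subset (Set.finite_empty)
  intro x hx; simp at hx

theorem swap_varsE {d : ℕ} {s t : Tm} {E' : List (ℕ × Tm × Tm)} :
    varsE ((d, t, s) :: E') = varsE ((d, s, t) :: E') := by
  ext x
  simp only [mem_varsE, List.mem_cons]
  constructor
  · rintro ⟨e, he | he, h⟩
    · exact ⟨(d, s, t), Or.inl rfl, by rw [he] at h; tauto⟩
    · exact ⟨e, Or.inr he, h⟩
  · rintro ⟨e, he | he, h⟩
    · exact ⟨(d, t, s), Or.inl rfl, by rw [he] at h; tauto⟩
    · exact ⟨e, Or.inr he, h⟩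

theorem swap_unifiesE {σ : ℕ → Tm} {d : ℕ} {s t : Tm} {E' : List (ℕ × Tm × Tm)} :
    UnifiesE σ ((d, s, t) :: E') ↔ UnifiesE σ ((d, t, s) :: E') := by
  constructor <;>
  · intro h e he
    rcases List.mem_cons.1 he with h1 | h1
    · rw [h1]; exact (h _ (List.mem_cons_self)).symm
    · exact h e (List.mem_cons_of_mem _ h1)

theorem swap_concl {ℓ : ℕ → ℕ} {H d : ℕ} {s t : Tm} {E' : List (ℕ × Tm × Tm)} {θ : ℕ → Tm}
    (h : Concl ℓ H ((d, s, t) :: E') θ) : Concl ℓ H ((d, t, s) :: E') θ := by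
  obtain ⟨h1, h2, h3, h4, h5, h6, h7⟩ := h
  refine ⟨h1, swap_unifiesE.1 h2, fun σ hσ hu => h3 σ hσ (swap_unifiesE.2 hu), h4, h5,
    fun x hx => ?_, fun x y hy => ?_⟩
  · rw [swap_varsE]; exact h6 x hx
  · rw [swap_varsE]; exact h7 x y hy

end AUX3
section AUX4
open Tm

theorem varsE_tail_subset {z d : ℕ} {s t : Tm} {E' : List (ℕ × Tm × Tm)}
    (h : z ∈ varsE E') : z ∈ varsE ((d, s, t) :: E') := by
  obtain ⟨e, he, h2⟩ := mem_varsE.1 h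
  exact mem_varsE.2 ⟨e, List.mem_cons_of_mem _ he, h2⟩

theorem unif_main (ℓ : ℕ → ℕ) (H : ℕ) : ∀ N n (E : List (ℕ × Tm × Tm)),
    (varsE E).card ≤ N → sizeE E ≤ n → UInv ℓ H E →
    (∃ σ, Finitary σ ∧ UnifiesE σ E) → ∃ θ, Concl ℓ H E θ := by
  intro N
  induction N using Nat.strong_induction_on with
  | _ N IHN =>
  have helim : ∀ (d x : ℕ) (t : Tm) (E' : List (ℕ × Tm × Tm)),
      t ≠ Tm.var x →
      (varsE ((d, Tm.var x, t) :: E')).card ≤ N →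
      UInv ℓ H ((d, Tm.var x, t) :: E') →
      (∃ σ, Finitary σ ∧ UnifiesE σ ((d, Tm.var x, t) :: E')) →
      ∃ θ, Concl ℓ H ((d, Tm.var x, t) :: E') θ := by
    rintro d x t E' htx hcard hinv ⟨σu, hσufin, hσu⟩
    have hinvh := hinv _ (List.mem_cons_self)
    have hL1h : ∀ y m, m ∈ occs y (Tm.var x) → d + m = ℓ y := hinvh.1
    have hL2h : ∀ y m, m ∈ occs y t → d + m = ℓ y := hinvh.2.1
    have hH2h : d + height t ≤ H := hinvh.2.2.2
    have hlx : ℓ x = d := by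
      have := hL1h x 0 (by simp)
      omega
    have hxt : x ∉ varsL t := by
      intro hx
      obtain ⟨m, hm⟩ := mem_varsL_iff'.1 hx
      have hm' := hL2h x m hm
      have hm0 : m = 0 := by omega
      exact htx (occs_zero (hm0 ▸ hm))
    set δ : ℕ → Tm := fun z => if z = x then t else Tm.var z with hδ
    have hδx : δ x = t := by simp [hδ]
    have hδne : ∀ z, z ≠ x → δ z = Tm.var z := by intro z hz; simp [hδ, hz]
    have hδid : ∀ s : Tm, x ∉ varsL s → subst δ s = s := by
      intro s hs
      rw [subst_congr (τ := fun z => Tm.var z), subst_id]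
      intro z hz
      have hzx : z ≠ x := fun he => hs (he ▸ hz)
      simp [hδ, hzx]
    have hδt : subst δ t = t := hδid t hxt
    set E'' := E'.map (fun e => (e.1, subst δ e.2.1, subst δ e.2.2)) with hE''
    have hxE : x ∈ varsE ((d, Tm.var x, t) :: E') :=
      mem_varsE.2 ⟨_, List.mem_cons_self, Or.inl (by simp)⟩
    have htsub : ∀ z ∈ varsL t, z ∈ varsE ((d, Tm.var x, t) :: E') :=
      fun z hz => mem_varsE.2 ⟨_, List.mem_cons_self, Or.inr hz⟩
    have hkeyv : ∀ (s : Tm) (z : ℕ), z ∈ varsL (subst δ s) →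
        (z ∈ varsL s ∨ z ∈ varsL t) ∧ z ≠ x := by
      intro s z hzs
      obtain ⟨w, hw, hzw⟩ := mem_vars_subst.1 hzs
      by_cases hwx : w = x
      · subst hwx; rw [hδx] at hzw
        exact ⟨Or.inr hzw, fun he => hxt (he ▸ hzw)⟩
      · rw [hδne w hwx] at hzw
        simp only [varsL_var, List.mem_singleton] at hzw
        subst hzw
        exact ⟨Or.inl hw, hwx⟩
    have hvsub : ∀ z ∈ varsE E'', z ∈ varsE ((d, Tm.var x, t) :: E') ∧ z ≠ x := by
      intro z hz
      obtain ⟨e'', he'', hz2⟩ := mem_varsE.1 hz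
      obtain ⟨e, he, rfl⟩ := List.mem_map.1 he''
      rcases hz2 with hz2 | hz2
      · obtain ⟨hor, hne⟩ := hkeyv _ _ hz2
        refine ⟨?_, hne⟩
        rcases hor with h | h
        · exact mem_varsE.2 ⟨e, List.mem_cons_of_mem _ he, Or.inl h⟩
        · exact htsub z h
      · obtain ⟨hor, hne⟩ := hkeyv _ _ hz2
        refine ⟨?_, hne⟩
        rcases hor with h | h
        · exact mem_varsE.2 ⟨e, List.mem_cons_of_mem _ he, Or.inr h⟩
        · exact htsub z h
    have hcard'' : (varsE E'').card ≤ N - 1 := by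
      have hsub : varsE E'' ⊆ (varsE ((d, Tm.var x, t) :: E')).erase x := by
        intro z hz
        exact Finset.mem_erase.2 ⟨(hvsub z hz).2, (hvsub z hz).1⟩
      have h1 := Finset.card_le_card hsub
      rw [Finset.card_erase_of_mem hxE] at h1
      omega
    have hinv'' : UInv ℓ H E'' := by
      intro e'' he''
      obtain ⟨e, he, rfl⟩ := List.mem_map.1 he''
      obtain ⟨hL1, hL2, hH1, hH2⟩ := hinv e (List.mem_cons_of_mem _ he)
      have key : ∀ s : Tm, (∀ y m, m ∈ occs y s → e.1 + m = ℓ y) → e.1 + height s ≤ H →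
          (∀ y m, m ∈ occs y (subst δ s) → e.1 + m = ℓ y) ∧ e.1 + height (subst δ s) ≤ H := by
        intro s hLs hHs
        constructor
        · intro y m hm
          obtain ⟨z, m1, m2, hm1, hm2, rfl⟩ := (occs_subst _).1 hm
          by_cases hzx : z = x
          · subst hzx; rw [hδx] at hm2
            have h1 := hLs z m1 hm1
            have h2 := hL2h y m2 hm2
            omega
          · rw [hδne z hzx] at hm2
            by_cases hzy : z = y
            · subst hzy
              rw [occs_var, if_pos rfl] at hm2
              simp only [List.mem_singleton] at hm2
              subst hm2
              have := hLs z m1 hm1; omega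
            · rw [occs_var, if_neg hzy] at hm2; simp at hm2
        · have hb : height (subst δ s) ≤ H - e.1 := by
            apply height_subst_le
            · intro z m hm
              by_cases hzx : z = x
              · subst hzx; rw [hδx]
                have h1 := hLs z m hm
                have h2 := hH2h
                omega
              · rw [hδne z hzx]
                have := occs_le_height m hm
                simp only [height_var]
                omega
            · omega
          omega
      exact ⟨(key _ (hL1) hH1).1, (key _ (hL2) hH2).1, (key _ (hL1) hH1).2, (key _ (hL2) hH2).2⟩
    have hcomp : ∀ σ, UnifiesE σ ((d, Tm.var x, t) :: E') → ∀ s, subst σ (subst δ s) = subst σ s := by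
      intro σ hσ s
      have hx0 : σ x = subst σ t := by
        have := hσ _ (List.mem_cons_self)
        simpa using this
      rw [subst_subst]
      apply subst_congr
      intro z _
      by_cases hzx : z = x
      · subst hzx; rw [hδx]; exact hx0.symm
      · rw [hδne z hzx]; simp
    have hkeyU : ∀ σ, UnifiesE σ ((d, Tm.var x, t) :: E') → UnifiesE σ E'' := by
      intro σ hσ e'' he''
      obtain ⟨e, he, rfl⟩ := List.mem_map.1 he''
      show subst σ (subst δ e.2.1) = subst σ (subst δ e.2.2)
      rw [hcomp σ hσ, hcomp σ hσ]
      exact hσ e (List.mem_cons_of_mem _ he)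
    have hNpos : 1 ≤ N := le_trans (Finset.card_pos.2 ⟨x, hxE⟩) hcard
    obtain ⟨θ', hθ'fin, hθ'uni, hθ'mgu, hθ'lev, hθ'ht, hθ'supp, hθ'img⟩ :=
      IHN (N - 1) (by omega) (sizeE E'') E'' hcard'' le_rfl hinv'' ⟨σu, hσufin, hkeyU σu hσu⟩
    refine ⟨fun z => subst θ' (δ z), ?_, ?_, ?_, ?_, ?_, ?_, ?_⟩
    · -- Finitary
      apply Set.Finite.subset (Set.Finite.union (Set.finite_singleton x) hθ'fin)
      intro z hz
      by_cases hzx : z = x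
      · exact Or.inl hzx
      · right
        intro hth
        apply hz
        show subst θ' (δ z) = Tm.var z
        rw [hδne z hzx]
        simpa using hth
    · -- UnifiesE
      intro e he
      rcases List.mem_cons.1 he with he | he
      · subst he
        show subst (fun z => subst θ' (δ z)) (Tm.var x) = subst (fun z => subst θ' (δ z)) t
        rw [subst_var']
        show subst θ' (δ x) = _
        rw [hδx]
        calc subst θ' t = subst θ' (subst δ t) := by rw [hδt]
        _ = subst (fun z => subst θ' (δ z)) t := subst_subst θ' δ t
      · exact ((subst_subst θ' δ e.2.1).symm).trans
          ((hθ'uni _ (List.mem_map_of_mem he)).trans (subst_subst θ' δ e.2.2))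
    · -- MGU
      intro σ hσfin hσ
      obtain ⟨ρ, hρfin, hρ⟩ := hθ'mgu σ hσfin (hkeyU σ hσ)
      refine ⟨ρ, hρfin, fun z => ?_⟩
      show σ z = subst ρ (subst θ' (δ z))
      have h1 : subst ρ (subst θ' (δ z)) = subst (fun w => subst ρ (θ' w)) (δ z) := subst_subst _ _ _
      have h2 : subst (fun w => subst ρ (θ' w)) (δ z) = subst σ (δ z) := by
        apply subst_congr
        intro w _
        exact (hρ w).symm
      have h3 : subst σ (δ z) = σ z := by
        by_cases hzx : z = x
        · subst hzx; rw [hδx]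
          have := hσ _ (List.mem_cons_self)
          simpa using this.symm
        · rw [hδne z hzx]; simp
      rw [h1, h2, h3]
    · -- levels
      intro z y m hm
      obtain ⟨w, m1, m2, hm1, hm2, rfl⟩ := (occs_subst _).1 hm
      by_cases hzx : z = x
      · subst hzx; rw [hδx] at hm1
        have h1 := hL2h w m1 hm1
        have h2 := hθ'lev w y m2 hm2
        omega
      · rw [hδne z hzx] at hm1
        by_cases hzw : z = w
        · subst hzw
          rw [occs_var, if_pos rfl] at hm1
          simp only [List.mem_singleton] at hm1
          subst hm1
          have := hθ'lev z y m2 hm2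
          omega
        · rw [occs_var, if_neg hzw] at hm1; simp at hm1
    · -- heights
      intro z hz
      by_cases hzx : z = x
      · subst hzx
        show ℓ z + height (subst θ' (δ z)) ≤ H
        rw [hδx]
        have hxH : ℓ z + height t ≤ H := by
          have := hH2h; omega
        have hb : height (subst θ' t) ≤ H - ℓ z := by
          apply height_subst_le
          · intro w m hm
            have h1 := hL2h w m hm
            by_cases hw : θ' w = Tm.var w
            · rw [hw]
              have := occs_le_height m hm
              simp only [height_var]
              omega
            · have := hθ'ht w hw
              omega
          · omega
        omega
      · show ℓ z + height (subst θ' (δ z)) ≤ H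
        rw [hδne z hzx, subst_var']
        apply hθ'ht
        intro hth
        apply hz
        show subst θ' (δ z) = Tm.var z
        rw [hδne z hzx]
        simpa using hth
    · -- support
      intro z hz
      by_cases hzx : z = x
      · subst hzx; exact hxE
      · have : θ' z ≠ Tm.var z := by
          intro hth
          apply hz
          show subst θ' (δ z) = Tm.var z
          rw [hδne z hzx]
          simpa using hth
        exact (hvsub z (hθ'supp z this)).1
    · -- image
      intro z y hy
      by_cases hzx : z = x
      · subst hzx
        have hy' : y ∈ varsL (subst θ' (δ z)) := hy
        rw [hδx] at hy'
        obtain ⟨w, hw, hyw⟩ := mem_vars_subst.1 hy'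
        rcases hθ'img w y hyw with h | h
        · exact Or.inl (hvsub y h).1
        · subst h; exact Or.inl (htsub y hw)
      · have hy' : y ∈ varsL (subst θ' (δ z)) := hy
        rw [hδne z hzx, subst_var'] at hy'
        rcases hθ'img z y hy' with h | h
        · exact Or.inl (hvsub y h).1
        · exact Or.inr h
  intro n
  induction n using Nat.strong_induction_on with
  | _ n IHn =>
  rintro E hcard hsize hinv ⟨σu, hσufin, hσu⟩
  match E with
  | [] =>
    refine ⟨fun z => Tm.var z, finitary_var, fun e he => by simp at he, ?_, ?_, ?_, ?_, ?_⟩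
    · intro σ hσfin _
      exact ⟨σ, hσfin, fun z => by simp⟩
    · intro z y m hm
      rw [occs_var] at hm
      split at hm
      · rename_i hzy; subst hzy
        simp only [List.mem_singleton] at hm
        omega
      · simp at hm
    · intro z hz; exact absurd rfl hz
    · intro z hz; exact absurd rfl hz
    · intro z y hy
      simp only [varsL_var, List.mem_singleton] at hy
      exact Or.inr hy
  | (d, s, t) :: E' =>
    by_cases hst : s = t
    · -- drop the trivial equation
      subst hst
      have hszs : 1 ≤ size s := size_pos s
      have hsz : sizeE E' + 2 ≤ n := by
        have : sizeE ((d, s, s) :: E') = size s + size s + sizeE E' := by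
          simp [sizeE]; try omega
        omega
      have hcard' : (varsE E').card ≤ N := by
        refine le_trans (Finset.card_le_card ?_) hcard
        intro z hz
        exact varsE_tail_subset hz
      obtain ⟨θ, hfin, huni, hmgu, hlev, hht, hsupp, himg⟩ :=
        IHn (n - 1) (by omega) E' hcard' (by omega)
          (fun e he => hinv e (List.mem_cons_of_mem _ he))
          ⟨σu, hσufin, fun e he => hσu e (List.mem_cons_of_mem _ he)⟩
      refine ⟨θ, hfin, ?_, ?_, hlev, hht,
        fun z hz => varsE_tail_subset (hsupp z hz),
        fun z y hy => (himg z y hy).imp_left varsE_tail_subset⟩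
      · intro e he
        rcases List.mem_cons.1 he with he | he
        · subst he; rfl
        · exact huni e he
      · intro σ hσfin hσ
        exact hmgu σ hσfin (fun e he => hσ e (List.mem_cons_of_mem _ he))
    · match s, t with
      | Tm.var x, t =>
        exact helim d x t E' (fun he => hst he.symm) hcard hinv ⟨σu, hσufin, hσu⟩
      | Tm.app f ss, Tm.var x =>
        obtain ⟨θ, hθ⟩ := helim d x (Tm.app f ss) E' (by intro he; exact hst (by rw [he]))
          (by rw [swap_varsE (s := Tm.app f ss) (t := Tm.var x)]; exact hcard)
          (by
            intro e he
            rcases List.mem_cons.1 he with he | he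
            · subst he
              have := hinv _ (List.mem_cons_self)
              exact ⟨this.2.1, this.1, this.2.2.2, this.2.2.1⟩
            · exact hinv e (List.mem_cons_of_mem _ he))
          ⟨σu, hσufin, swap_unifiesE.1 hσu⟩
        exact ⟨θ, swap_concl hθ⟩
      | Tm.app f ss, Tm.app g ts =>
        have hhead := hσu _ (List.mem_cons_self)
        simp only [subst_app] at hhead
        have hfg : f = g := by injection hhead
        subst hfg
        have hmaps : ss.map (subst σu) = ts.map (subst σu) := by injection hhead
        have hlen : ss.length = ts.length := by
          have := congrArg List.length hmaps
          simpa using this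
        set E0 : List (ℕ × Tm × Tm) := ((ss.zip ts).map fun p => (d + 1, p.1, p.2)) ++ E' with hE0
        have hmemE0 : ∀ p ∈ ss.zip ts, (d + 1, p.1, p.2) ∈ E0 := by
          intro p hp
          exact List.mem_append_left _ (List.mem_map_of_mem hp)
        have hvars0 : ∀ z ∈ varsE E0, z ∈ varsE ((d, Tm.app f ss, Tm.app f ts) :: E') := by
          intro z hz
          obtain ⟨e, he, h2⟩ := mem_varsE.1 hz
          rcases List.mem_append.1 he with he | he
          · obtain ⟨p, hp, rfl⟩ := List.mem_map.1 he
            obtain ⟨hp1, hp2⟩ := List.of_mem_zip hp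
            refine mem_varsE.2 ⟨_, List.mem_cons_self, ?_⟩
            rcases h2 with h2 | h2
            · exact Or.inl (mem_varsL_app hp1 h2)
            · exact Or.inr (mem_varsL_app hp2 h2)
          · exact varsE_tail_subset (mem_varsE.2 ⟨e, he, h2⟩)
        have hcard0 : (varsE E0).card ≤ N := by
          refine le_trans (Finset.card_le_card ?_) hcard
          intro z hz
          exact hvars0 z hz
        have hsize0 : sizeE E0 + 2 ≤ n := by
          have h1 : sizeE E0 = ((ss.zip ts).map fun p => size p.1 + size p.2).sum + sizeE E' := by
            rw [hE0]
            simp only [sizeE, List.map_append, List.sum_append, List.map_map]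
            rfl
          have h2 : sizeE ((d, Tm.app f ss, Tm.app f ts) :: E') =
              size (Tm.app f ss) + size (Tm.app f ts) + sizeE E' := by
            simp [sizeE]; try omega
          rw [h1, zip_sum_sizes ss ts hlen]
          rw [size_app, size_app] at h2
          omega
        have hinv0 : UInv ℓ H E0 := by
          intro e he
          rcases List.mem_append.1 he with he | he
          · obtain ⟨p, hp, rfl⟩ := List.mem_map.1 he
            obtain ⟨hp1, hp2⟩ := List.of_mem_zip hp
            obtain ⟨hL1, hL2, hH1, hH2⟩ := hinv _ (List.mem_cons_self)
            have hH1' : d + height (Tm.app f ss) ≤ H := hH1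
            have hH2' : d + height (Tm.app f ts) ≤ H := hH2
            have hL1' : ∀ y m, m ∈ occs y (Tm.app f ss) → d + m = ℓ y := hL1
            have hL2' : ∀ y m, m ∈ occs y (Tm.app f ts) → d + m = ℓ y := hL2
            refine ⟨fun y m hm => ?_, fun y m hm => ?_, ?_, ?_⟩
            · show d + 1 + m = ℓ y
              have := hL1' y (m + 1) (mem_occs_app hp1 hm); omega
            · show d + 1 + m = ℓ y
              have := hL2' y (m + 1) (mem_occs_app hp2 hm); omega
            · show d + 1 + height p.1 ≤ H
              have := height_lt_app (f := f) hp1; omega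
            · show d + 1 + height p.2 ≤ H
              have := height_lt_app (f := f) hp2; omega
          · exact hinv e (List.mem_cons_of_mem _ he)
        have hdecomp : ∀ σ, UnifiesE σ ((d, Tm.app f ss, Tm.app f ts) :: E') → UnifiesE σ E0 := by
          intro σ hσ e he
          rcases List.mem_append.1 he with he | he
          · obtain ⟨p, hp, rfl⟩ := List.mem_map.1 he
            have hh := hσ _ (List.mem_cons_self)
            simp only [subst_app] at hh
            have : ss.map (subst σ) = ts.map (subst σ) := by injection hh
            exact zip_of_map_eq ss ts this p hp
          · exact hσ e (List.mem_cons_of_mem _ he)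
        obtain ⟨θ, hfin, huni, hmgu, hlev, hht, hsupp, himg⟩ :=
          IHn (n - 1) (by omega) E0 hcard0 (by omega) hinv0
            ⟨σu, hσufin, hdecomp σu hσu⟩
        refine ⟨θ, hfin, ?_, ?_, hlev, hht,
          fun z hz => hvars0 z (hsupp z hz),
          fun z y hy => (himg z y hy).imp_left (hvars0 y)⟩
        · intro e he
          rcases List.mem_cons.1 he with he | he
          · subst he
            show subst θ (Tm.app f ss) = subst θ (Tm.app f ts)
            rw [subst_app, subst_app]
            congr 1
            refine map_eq_of_zip ss ts hlen fun p hp => ?_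
            exact huni _ (hmemE0 p hp)
          · exact huni e (List.mem_append_right _ he)
        · intro σ hσfin hσ
          exact hmgu σ hσfin (hdecomp σ hσ)

end AUX4
section AUX5
open Tm

/-- extraction of the variable under a `var`. -/
def varHead : Tm → ℕ
  | Tm.var z => z
  | Tm.app _ _ => 0

theorem key_lemma (u v t w : Tm) (hbf : BalancedF (u, v)) (hbg : BalancedF (t, w))
    (hfl : tvars u ⊆ tvars v) (hgl : tvars t ⊆ tvars w)
    (hdisj : flowVars (u, v) ∩ flowVars (t, w) = ∅)
    (θ : ℕ → Tm) (hmgu : IsMGU θ v t) :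
    BalancedF (subst θ u, subst θ w) ∧
      heightF (subst θ u, subst θ w) ≤ max (heightF (u, v)) (heightF (t, w)) := by
  obtain ⟨hθfin, hθuni, hθmgu⟩ := hmgu
  -- disjointness of variables
  have hdisj' : ∀ y, y ∈ varsL u ∨ y ∈ varsL v → y ∈ varsL t ∨ y ∈ varsL w → False := by
    intro y h1 h2
    have : y ∈ flowVars (u, v) ∩ flowVars (t, w) := by
      constructor
      · rcases h1 with h | h
        · exact Or.inl h
        · exact Or.inr h
      · rcases h2 with h | h
        · exact Or.inl h
        · exact Or.inr h
    rw [hdisj] at this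
    exact this
  -- the level function
  set ℓ : ℕ → ℕ := fun y => (occs y v ++ occs y w).headD 0 with hℓ
  -- balance facts
  have hbal1 : ∀ y n m, n ∈ occs y u ++ occs y v → m ∈ occs y u ++ occs y v → n = m :=
    fun y n m hn hm => hbf y n hn m hm
  have hbal2 : ∀ y n m, n ∈ occs y t ++ occs y w → m ∈ occs y t ++ occs y w → n = m :=
    fun y n m hn hm => hbg y n hn m hm
  have hlv : ∀ y m, m ∈ occs y v → ℓ y = m := by
    intro y m hm
    have hne : occs y v ≠ [] := fun he => by simp [he] at hm
    obtain ⟨a, l, hal⟩ := List.exists_cons_of_ne_nil hne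
    have : ℓ y = a := by rw [hℓ]; simp [hal]
    rw [this]
    exact hbal1 y a m (by rw [hal]; simp) (List.mem_append_right _ hm)
  have hnv : ∀ y, y ∈ varsL w → occs y v = [] := by
    intro y hy
    by_contra hne
    obtain ⟨m, hm⟩ := List.exists_mem_of_ne_nil _ hne
    exact hdisj' y (Or.inr (mem_varsL_of_occs hm)) (Or.inr hy)
  have hlw : ∀ y m, m ∈ occs y w → ℓ y = m := by
    intro y m hm
    have h0 : occs y v = [] := hnv y (mem_varsL_of_occs hm)
    have hne : occs y w ≠ [] := fun he => by simp [he] at hm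
    obtain ⟨a, l, hal⟩ := List.exists_cons_of_ne_nil hne
    have : ℓ y = a := by rw [hℓ]; simp [h0, hal]
    rw [this]
    exact hbal2 y a m (by rw [hal]; simp) (List.mem_append_right _ hm)
  have hlu : ∀ y m, m ∈ occs y u → ℓ y = m := by
    intro y m hm
    have hyv : y ∈ varsL v := hfl (mem_varsL_iff'.2 ⟨m, hm⟩)
    obtain ⟨m', hm'⟩ := mem_varsL_iff'.1 hyv
    rw [hlv y m' hm']
    exact hbal1 y m' m (List.mem_append_right _ hm') (List.mem_append_left _ hm)
  have hlt : ∀ y m, m ∈ occs y t → ℓ y = m := by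
    intro y m hm
    have hyw : y ∈ varsL w := hgl (mem_varsL_iff'.2 ⟨m, hm⟩)
    obtain ⟨m', hm'⟩ := mem_varsL_iff'.1 hyw
    rw [hlw y m' hm']
    exact hbal2 y m' m (List.mem_append_right _ hm') (List.mem_append_left _ hm)
  set H := max (height v) (height t) with hH
  -- apply the unification theorem
  obtain ⟨θ₀, hθ₀fin, hθ₀uni, hθ₀mgu, hθ₀lev, hθ₀ht, hθ₀supp, hθ₀img⟩ :=
    unif_main ℓ H (varsE [(0, v, t)]).card (sizeE [(0, v, t)]) [(0, v, t)] le_rfl le_rfl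
      (by
        rintro e he
        simp only [List.mem_singleton] at he
        subst he
        refine ⟨fun y m hm => ?_, fun y m hm => ?_, ?_, ?_⟩
        · show 0 + m = ℓ y
          rw [hlv y m hm]; omega
        · show 0 + m = ℓ y
          rw [hlt y m hm]; omega
        · show 0 + height v ≤ H
          omega
        · show 0 + height t ≤ H
          omega)
      ⟨θ, hθfin, by
        rintro e he
        simp only [List.mem_singleton] at he
        subst he
        exact hθuni⟩
  have hθ₀unifies : Unifies θ₀ v t := hθ₀uni _ (List.mem_singleton_self _)
  -- the two mgus factor through each other
  obtain ⟨ρ', hρ'fin, hρ'⟩ := hθ₀mgu θ hθfin (by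
    rintro e he
    simp only [List.mem_singleton] at he
    subst he
    exact hθuni)
  obtain ⟨ρ, hρfin, hρ⟩ := hθmgu θ₀ hθ₀fin hθ₀unifies
  -- ρ' is a variable renaming on the variables of the θ₀-instances, inverted by ρ
  have hfix : ∀ x y, y ∈ varsL (θ₀ x) → subst ρ (ρ' y) = Tm.var y := by
    intro x y hy
    have h1 : subst (fun z => subst ρ (ρ' z)) (θ₀ x) = θ₀ x := by
      rw [← subst_subst]
      rw [← hρ' x]
      exact (hρ x).symm
    exact subst_eq_self h1 y hy
  have hvarim : ∀ x y, y ∈ varsL (θ₀ x) →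
      ρ' y = Tm.var (varHead (ρ' y)) ∧ ρ (varHead (ρ' y)) = Tm.var y := by
    intro x y hy
    have h1 := hfix x y hy
    cases hc : ρ' y with
    | var z => rw [hc] at h1; simp only [subst_var'] at h1; exact ⟨by rw [varHead], by rw [varHead]; exact h1⟩
    | app f l =>
      rw [hc, subst_app] at h1
      exact absurd h1 (by intro hcon; exact Tm.noConfusion hcon)
  -- facts about the θ₀ product
  have hball : ∀ (s : Tm), (∀ y m, m ∈ occs y s → ℓ y = m) →
      ∀ y n, n ∈ occs y (subst θ₀ s) → n = ℓ y := by
    intro s hs y n hn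
    obtain ⟨z, m, m', hm, hm', rfl⟩ := (occs_subst _).1 hn
    have h1 := hs z m hm
    have h2 := hθ₀lev z y m' hm'
    omega
  set B := max (heightF (u, v)) (heightF (t, w)) with hB
  have hHB : H ≤ B := by
    have h1 : height v ≤ heightF (u, v) := le_max_right _ _
    have h2 : height t ≤ heightF (t, w) := le_max_left _ _
    simp only [hB, hH]
    omega
  have hhts : ∀ (s : Tm), (∀ y m, m ∈ occs y s → ℓ y = m) → height s ≤ B →
      height (subst θ₀ s) ≤ B := by
    intro s hs hhs
    apply height_subst_le
    · intro z m hm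
      by_cases hz : θ₀ z = Tm.var z
      · rw [hz]
        have := occs_le_height m hm
        simp only [height_var]
        omega
      · have h1 := hθ₀ht z hz
        have h2 := hs z m hm
        omega
    · exact hhs
  have hhu : height (subst θ₀ u) ≤ B := by
    refine hhts u hlu (le_trans ?_ (le_max_left _ _))
    exact le_max_left _ _
  have hhw : height (subst θ₀ w) ≤ B := by
    refine hhts w hlw (le_trans ?_ (le_max_right _ _))
    exact le_max_right _ _
  -- transfer along ρ'
  have hsubu : subst θ u = subst ρ' (subst θ₀ u) := by
    rw [subst_subst]
    exact subst_congr fun z _ => hρ' z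
  have hsubw : subst θ w = subst ρ' (subst θ₀ w) := by
    rw [subst_subst]
    exact subst_congr fun z _ => hρ' z
  have hrenu : ∀ y ∈ varsL (subst θ₀ u), ρ' y = Tm.var (varHead (ρ' y)) := by
    intro y hy
    obtain ⟨z, hz, hy2⟩ := mem_vars_subst.1 hy
    exact (hvarim z y hy2).1
  have hrenw : ∀ y ∈ varsL (subst θ₀ w), ρ' y = Tm.var (varHead (ρ' y)) := by
    intro y hy
    obtain ⟨z, hz, hy2⟩ := mem_vars_subst.1 hy
    exact (hvarim z y hy2).1
  have hinj : ∀ y₁ y₂, (y₁ ∈ varsL (subst θ₀ u) ∨ y₁ ∈ varsL (subst θ₀ w)) →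
      (y₂ ∈ varsL (subst θ₀ u) ∨ y₂ ∈ varsL (subst θ₀ w)) →
      varHead (ρ' y₁) = varHead (ρ' y₂) → y₁ = y₂ := by
    intro y₁ y₂ h1 h2 he
    have k1 : ρ (varHead (ρ' y₁)) = Tm.var y₁ := by
      rcases h1 with h | h <;>
      · obtain ⟨z, hz, hy2⟩ := mem_vars_subst.1 h
        exact (hvarim z y₁ hy2).2
    have k2 : ρ (varHead (ρ' y₂)) = Tm.var y₂ := by
      rcases h2 with h | h <;>
      · obtain ⟨z, hz, hy2⟩ := mem_vars_subst.1 h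
        exact (hvarim z y₂ hy2).2
    rw [he, k2] at k1
    exact (Tm.var.inj k1).symm
  constructor
  · -- balance of the product
    intro y' n hn m hm
    have hocc : ∀ k, k ∈ occs y' ((subst θ u, subst θ w) : UFlow).1 ++
        occs y' ((subst θ u, subst θ w) : UFlow).2 →
        ∃ z, (z ∈ varsL (subst θ₀ u) ∨ z ∈ varsL (subst θ₀ w)) ∧
          varHead (ρ' z) = y' ∧ k = ℓ z := by
      intro k hk
      rcases List.mem_append.1 hk with hk | hk
      · rw [show ((subst θ u, subst θ w) : UFlow).1 = subst θ u from rfl, hsubu] at hk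
        obtain ⟨z, hz1, hz2, hz3⟩ := (occs_rename hrenu).1 hk
        exact ⟨z, Or.inl hz1, hz2, hball u hlu z k hz3⟩
      · rw [show ((subst θ u, subst θ w) : UFlow).2 = subst θ w from rfl, hsubw] at hk
        obtain ⟨z, hz1, hz2, hz3⟩ := (occs_rename hrenw).1 hk
        exact ⟨z, Or.inr hz1, hz2, hball w hlw z k hz3⟩
    obtain ⟨z1, hm1, he1, hk1⟩ := hocc n hn
    obtain ⟨z2, hm2, he2, hk2⟩ := hocc m hm
    have hz12 : z1 = z2 := hinj z1 z2 hm1 hm2 (he1.trans he2.symm)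
    rw [hk1, hk2, hz12]
  · -- height bound
    show max (height (subst θ u)) (height (subst θ w)) ≤ B
    have e1 : height (subst θ u) = height (subst θ₀ u) := by
      rw [hsubu]
      exact height_subst_rename fun y hy => ⟨varHead (ρ' y), hrenu y hy⟩
    have e2 : height (subst θ w) = height (subst θ₀ w) := by
      rw [hsubw]
      exact height_subst_rename fun y hy => ⟨varHead (ρ' y), hrenw y hy⟩
    rw [e1, e2]
    exact max_le hhu hhw

end AUX5
section AUX6
open Tm

theorem rename_occs {π : ℕ ≃ ℕ} {s : Tm} {y' n : ℕ} :
    n ∈ occs y' (rename π s) ↔ ∃ z, z ∈ varsL s ∧ π z = y' ∧ n ∈ occs z s := by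
  exact occs_rename (g := fun x => π x) (fun y _ => rfl)

theorem flowequiv_balanced {f g : UFlow} (h : FlowEquiv f g) (hb : BalancedF f) :
    BalancedF g := by
  obtain ⟨π, h1, h2⟩ := h
  intro y' n hn m hm
  have hocc : ∀ k, k ∈ occs y' g.1 ++ occs y' g.2 →
      ∃ z, π z = y' ∧ k ∈ occs z f.1 ++ occs z f.2 := by
    intro k hk
    rcases List.mem_append.1 hk with hk | hk
    · rw [← h1] at hk
      obtain ⟨z, hz1, hz2, hz3⟩ := rename_occs.1 hk
      exact ⟨z, hz2, List.mem_append_left _ hz3⟩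
    · rw [← h2] at hk
      obtain ⟨z, hz1, hz2, hz3⟩ := rename_occs.1 hk
      exact ⟨z, hz2, List.mem_append_right _ hz3⟩
  obtain ⟨z1, he1, hk1⟩ := hocc n hn
  obtain ⟨z2, he2, hk2⟩ := hocc m hm
  have : z1 = z2 := π.injective (he1.trans he2.symm)
  subst this
  exact hb z1 n hk1 m hk2

theorem flowequiv_height {f g : UFlow} (h : FlowEquiv f g) : heightF g = heightF f := by
  obtain ⟨π, h1, h2⟩ := h
  have e1 : height g.1 = height f.1 := by
    rw [← h1]
    exact height_subst_rename fun y _ => ⟨π y, rfl⟩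
  have e2 : height g.2 = height f.2 := by
    rw [← h2]
    exact height_subst_rename fun y _ => ⟨π y, rfl⟩
  rw [heightF, heightF, e1, e2]

theorem flowequiv_flow {f g : UFlow} (h : FlowEquiv f g) (hf : IsFlow f) : IsFlow g := by
  obtain ⟨π, h1, h2⟩ := h
  intro y hy
  have hy1 : y ∈ varsL g.1 := hy
  rw [← h1] at hy1
  obtain ⟨z, hz, hyz⟩ := mem_vars_subst.1 hy1
  simp only [varsL_var, List.mem_singleton] at hyz
  subst hyz
  have hz2 : z ∈ varsL f.2 := hf hz
  show π z ∈ varsL g.2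
  rw [← h2]
  exact mem_vars_subst.2 ⟨z, hz2, by simp⟩

end AUX6

theorem balanced_subsemiring' (F G : Wiring) (hF : BalancedW F) (hG : BalancedW G)
    (hfF : F.Finite) (hfG : G.Finite)
    (hflF : ∀ f ∈ F, IsFlow f) (hflG : ∀ g ∈ G, IsFlow g) :
    BalancedW (∅ : Wiring) ∧ BalancedW (F ∪ G) ∧ BalancedW (wmul F G) ∧
    heightW (wmul F G) ≤ max (heightW F) (heightW G) := by
  have hprod : ∀ h ∈ wmul F G,
      BalancedF h ∧ heightF h ≤ max (heightW F) (heightW G) := by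
    rintro h ⟨f, hf, g, hg, f', g', θ, hef, heg, hd, hm, rfl⟩
    have hbf' : BalancedF f' := flowequiv_balanced hef (hF f hf)
    have hbg' : BalancedF g' := flowequiv_balanced heg (hG g hg)
    have hff' : IsFlow f' := flowequiv_flow hef (hflF f hf)
    have hfg' : IsFlow g' := flowequiv_flow heg (hflG g hg)
    have hkey := key_lemma f'.1 f'.2 g'.1 g'.2 hbf' hbg' hff' hfg' hd θ hm
    refine ⟨hkey.1, le_trans hkey.2 ?_⟩
    rw [flowequiv_height hef, flowequiv_height heg]
    have hFb : heightF f ≤ heightW F :=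
      le_csSup (Set.Finite.bddAbove (hfF.image heightF)) (Set.mem_image_of_mem _ hf)
    have hGb : heightF g ≤ heightW G :=
      le_csSup (Set.Finite.bddAbove (hfG.image heightF)) (Set.mem_image_of_mem _ hg)
    omega
  refine ⟨fun f hf => absurd hf (Set.notMem_empty f),
    fun f hf => hf.elim (hF f) (hG f),
    fun h hh => (hprod h hh).1, ?_⟩
  by_cases hne : (heightF '' wmul F G).Nonempty
  · refine csSup_le hne ?_
    rintro b ⟨h, hh, rfl⟩
    exact (hprod h hh).2
  · rw [Set.not_nonempty_iff_eq_empty] at hne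
    rw [heightW, hne, csSup_empty]
    exact bot_le

/-- balanced wirings form a subsemiring (contain `0`, closed under
sums and products), and the height of a product is bounded by the maximum of the
heights. -/
theorem balanced_subsemiring (F G : Wiring) (hF : BalancedW F) (hG : BalancedW G)
    (hfF : F.Finite) (hfG : G.Finite)
    (hflF : ∀ f ∈ F, IsFlow f) (hflG : ∀ g ∈ G, IsFlow g) :
    BalancedW (∅ : Wiring) ∧ BalancedW (F ∪ G) ∧ BalancedW (wmul F G) ∧
    heightW (wmul F G) ≤ max (heightW F) (heightW G) :=
  balanced_subsemiring' F G hF hG hfF hfG hflF hflG
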